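/- Let d_i, σ_i, c_{ij} > 0 (i,j = 1,2,3,4) and θ ∈ ℝ. Set σ̃_i = σ_i − c_{i4} σ_4 / c_{44} for i = 1,2,3 and α*_i = c_{4i} for i = 1,2,3. Assume: [H1] σ̃_i > 0 for i = 1,2,3; [H2] min_{i=1,2,3}(α*_i · min_{j=1,2,3} σ̃_j/c_{ji}) · (min_{i=1,…,4} d_i)/(max_{i=1,…,4} d_i) ≥ σ_4. Then there is no positive C² solution (u_1, u_2, u_3, u_4) on ℝ (all components strictly positive) of the system d_i u_i'' + θ u_i' + u_i(σ_i − c_{i1}u_1 − c_{i2}u_2 − c_{i3}u_3 − c_{i4}u_4) = 0 (i = 1,…,4) satisfying (u_1,u_2,u_3,u_4)(x) → (σ_1/c_{11}, 0, 0, 0) as x → -∞ and (u_1,u_2,u_3,u_4)(x) → (0, σ_2/c_{22}, 0, 0) as x → +∞. -/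

import Mathlib

open Filter

section LV4Aux

open Real Set Topology

lemma lemE_alg {S u κ : ℝ} (hS0 : 0 < S) (hS1 : S < 1) (hSu : S ≤ u) (hu1 : u ≤ 1)
    (hκ : 1 ≤ κ) : (u ^ κ - S ^ κ) / (1 - S ^ κ) ≤ (u - S) / (1 - S) := by
  have hS1' : (0:ℝ) < 1 - S := by linarith
  have hSκ : S ^ κ < 1 := Real.rpow_lt_one hS0.le hS1 (by linarith)
  have hSκ' : (0:ℝ) < 1 - S ^ κ := by linarith
  set t : ℝ := (1 - u) / (1 - S) with ht
  have ht0 : 0 ≤ t := div_nonneg (by linarith) hS1'.le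
  have ht1 : t ≤ 1 := by rw [ht, div_le_one hS1']; linarith
  have htS : t * (1 - S) = 1 - u := by rw [ht]; exact div_mul_cancel₀ _ hS1'.ne'
  have hu_eq : u = t * S + (1 - t) * 1 := by
    linear_combination htS
  have hconv := (convexOn_rpow hκ).2 (Set.mem_Ici.2 hS0.le) (Set.mem_Ici.2 zero_le_one)
    ht0 (by linarith : (0:ℝ) ≤ 1 - t) (by ring)
  simp only [smul_eq_mul, mul_one] at hconv
  have hone : (1:ℝ) ^ κ = 1 := Real.one_rpow κ
  have key : u ^ κ ≤ t * S ^ κ + (1 - t) := by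
    rw [hu_eq]
    calc (t * S + (1 - t) * 1) ^ κ ≤ t * S ^ κ + (1 - t) * (1:ℝ) ^ κ := by
          simpa [mul_one] using hconv
      _ = t * S ^ κ + (1 - t) := by rw [hone]; ring
  have h1 : u ^ κ - S ^ κ ≤ (1 - t) * (1 - S ^ κ) := by nlinarith
  have h2 : (u ^ κ - S ^ κ) / (1 - S ^ κ) ≤ 1 - t := by
    rw [div_le_iff₀ hSκ']; linarith
  have h3 : (1:ℝ) - t = (u - S) / (1 - S) := by field_simp [ht]; linear_combination -htS
  linarith [h2, h3.le, h3.ge]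


lemma lemF_alg {S u κ : ℝ} (hS0 : 0 < S) (hS1 : S < 1) (hSu : S ≤ u) (hu1 : u ≤ 1)
    (hκ : 1 ≤ κ) :
    (u - S) / (1 - S) - (u ^ κ - S ^ κ) / (1 - S ^ κ) ≤ 1 - 1/κ := by
  have hS1' : (0:ℝ) < 1 - S := by linarith
  have hSκ : S ^ κ < 1 := Real.rpow_lt_one hS0.le hS1 (by linarith)
  have hSκ' : (0:ℝ) < 1 - S ^ κ := by linarith
  have hSκ0 : (0:ℝ) < S ^ κ := Real.rpow_pos_of_pos hS0 κ
  rcases eq_or_lt_of_le hκ with rfl | hκ1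
  · simp only [Real.rpow_one]
    simp
  have hκ0 : (0:ℝ) < κ := by linarith
  have hκ1' : (0:ℝ) < κ - 1 := by linarith
  -- Bernoulli : 1 + κ(S-1) ≤ S^κ
  have b1 : 1 + κ * (S - 1) ≤ S ^ κ := by
    have := one_add_mul_self_le_rpow_one_add (s := S - 1) (by linarith) hκ
    simpa using this
  have hbase0 : (0:ℝ) < (1 - S ^ κ) / (κ * (1 - S)) := by positivity
  have hbase1 : (1 - S ^ κ) / (κ * (1 - S)) ≤ 1 := by
    rw [div_le_one (by positivity)]; nlinarith
  set c : ℝ := ((1 - S ^ κ) / (κ * (1 - S))) ^ (1/(κ-1)) with hcdef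
  have hc0 : 0 < c := Real.rpow_pos_of_pos hbase0 _
  have hc1 : c ≤ 1 := Real.rpow_le_one hbase0.le hbase1 (by positivity)
  have hck : c ^ (κ - 1) = (1 - S ^ κ) / (κ * (1 - S)) := by
    rw [hcdef, ← Real.rpow_mul hbase0.le]
    rw [one_div, inv_mul_cancel₀ (by linarith : κ - 1 ≠ 0), Real.rpow_one]
  have hcκ : c ^ κ = c * ((1 - S ^ κ) / (κ * (1 - S))) := by
    have : c ^ κ = c ^ (1 + (κ - 1)) := by ring_nf
    rw [this, Real.rpow_add hc0, Real.rpow_one, hck]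
  -- tangent line inequality at c : c^κ + κ c^{κ-1}(u-c) ≤ u^κ
  have key1 : c ^ κ + κ * c ^ (κ - 1) * (u - c) ≤ u ^ κ := by
    have hu0 : (0:ℝ) ≤ u := by linarith
    have hb2 : 1 + κ * (u/c - 1) ≤ (u/c) ^ κ := by
      have := one_add_mul_self_le_rpow_one_add (s := u/c - 1) (by
        have : 0 ≤ u / c := by positivity
        linarith) hκ
      simpa using this
    have hdiv : (u/c) ^ κ = u ^ κ / c ^ κ := Real.div_rpow hu0 hc0.le κ
    rw [hdiv] at hb2
    have hcκ0 : (0:ℝ) < c ^ κ := Real.rpow_pos_of_pos hc0 κ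
    have h3 : c ^ κ * (1 + κ * (u/c - 1)) ≤ u ^ κ := by
      rw [ ← le_div_iff₀' hcκ0]; linarith [hb2]
    have hsub : c ^ κ / c = c ^ (κ - 1) := by
      rw [Real.rpow_sub hc0, Real.rpow_one]
    calc c ^ κ + κ * c ^ (κ - 1) * (u - c)
        = c ^ κ * (1 + κ * (u/c - 1)) := by
          rw [← hsub]; field_simp
      _ ≤ u ^ κ := h3
  have hw1 : (0:ℝ) ≤ 1 - 1/κ := by
    have : 1/κ ≤ 1 := by rw [div_le_one hκ0]; linarith
    linarith
  -- AM-GM : S^{κ-1} ≤ (1-1/κ) S^κ + 1/κ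
  have hamgm : S ^ (κ - 1) ≤ (1 - 1/κ) * S ^ κ + 1/κ := by
    have hw2 : (0:ℝ) ≤ 1/κ := by positivity
    have := Real.geom_mean_le_arith_mean2_weighted hw1 hw2 hSκ0.le zero_le_one (by ring)
    have heq : (S ^ κ) ^ (1 - 1/κ) = S ^ (κ - 1) := by
      rw [← Real.rpow_mul hS0.le]
      congr 1
      field_simp
    rw [heq, Real.one_rpow, mul_one, mul_one] at this
    linarith
  -- hfin : S^κ/(1-S^κ) ≤ S/(κ(1-S))
  have hSS : S ^ κ = S * S ^ (κ - 1) := by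
    have : S ^ κ = S ^ (1 + (κ - 1)) := by ring_nf
    rw [this, Real.rpow_add hS0, Real.rpow_one]
  have hfin : S ^ κ / (1 - S ^ κ) ≤ S / (κ * (1 - S)) := by
    rw [div_le_div_iff₀ hSκ' (by positivity)]
    have h5 : κ * S * S ^ (κ-1) ≤ κ * S * ((1 - 1/κ) * S ^ κ + 1/κ) :=
      mul_le_mul_of_nonneg_left hamgm (by positivity)
    have h6 : κ * S * S ^ (κ-1) = κ * S ^ κ := by rw [hSS]; ring
    have h7 : κ * S * ((1 - 1/κ) * S ^ κ + 1/κ) = (κ - 1) * S * S ^ κ + S := by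
      field_simp
    nlinarith [h5, h6, h7]
  -- main chain
  have step1 : (u - S) / (1 - S) - (u ^ κ - S ^ κ) / (1 - S ^ κ)
      ≤ (u - S) / (1 - S) - (c ^ κ + κ * c ^ (κ - 1) * (u - c) - S ^ κ) / (1 - S ^ κ) := by
    gcongr
  have step2 : (u - S) / (1 - S) - (c ^ κ + κ * c ^ (κ - 1) * (u - c) - S ^ κ) / (1 - S ^ κ)
      = (c * (1 - 1/κ) - S) / (1 - S) + S ^ κ / (1 - S ^ κ) := by
    rw [hcκ, hck]
    field_simp
    ring
  have step3 : (c * (1 - 1/κ) - S) / (1 - S) ≤ ((1 - 1/κ) - S) / (1 - S) := by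
    gcongr
    · nlinarith [mul_nonneg (sub_nonneg.2 hc1) hw1]
  have step4 : ((1 - 1/κ) - S) / (1 - S) + S / (κ * (1 - S)) = 1 - 1/κ := by
    field_simp
    ring
  linarith [step1, step2.le, step2.ge, step3, hfin, step4.le, step4.ge]


lemma aux_d1 {f : ℝ → ℝ} (hf : ContDiff ℝ 2 f) : Differentiable ℝ f :=
  hf.differentiable (by norm_num)

lemma aux_two : (2 : WithTop ℕ∞) = 1 + 1 := by norm_num

lemma aux_d2 {f : ℝ → ℝ} (hf : ContDiff ℝ 2 f) : Differentiable ℝ (deriv f) := by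
  rw [aux_two] at hf
  exact (contDiff_succ_iff_deriv.mp hf).2.2.differentiable (by norm_num)

lemma aux_c2 {f : ℝ → ℝ} (hf : ContDiff ℝ 2 f) : Continuous (deriv (deriv f)) := by
  rw [aux_two] at hf
  have h1 := (contDiff_succ_iff_deriv.mp hf).2.2
  rw [show (1 : WithTop ℕ∞) = 0 + 1 by norm_num] at h1
  exact (contDiff_succ_iff_deriv.mp h1).2.2.continuous

lemma second_deriv_nonneg_of_isLocalMin {f : ℝ → ℝ} (hf : ContDiff ℝ 2 f) {x : ℝ}
    (h : IsLocalMin f x) : 0 ≤ deriv (deriv f) x := by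
  by_contra hneg
  push_neg at hneg
  have hc : ContinuousAt (deriv (deriv f)) x := (aux_c2 hf).continuousAt
  have hev : ∀ᶠ y in 𝓝 x, deriv (deriv f) y < 0 :=
    (hc.tendsto).eventually_lt_const hneg
  obtain ⟨δ, hδ0, hδ⟩ := Metric.eventually_nhds_iff.mp hev
  have hIoo : ∀ y ∈ Ioo (x - δ) (x + δ), deriv (deriv f) y < 0 := by
    intro y hy
    apply hδ
    rw [Real.dist_eq, abs_lt]
    constructor <;> [linarith [hy.1]; linarith [hy.2]]
  have hanti : StrictAntiOn (deriv f) (Ioo (x - δ) (x + δ)) := by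
    apply strictAntiOn_of_deriv_neg (convex_Ioo _ _)
      ((aux_d2 hf).continuous.continuousOn)
    intro y hy
    exact hIoo y (by rwa [interior_Ioo] at hy)
  have hd0 : deriv f x = 0 := h.deriv_eq_zero
  have hxmem : x ∈ Ioo (x - δ) (x + δ) := by constructor <;> linarith
  have hderivneg : ∀ y ∈ Ioo x (x + δ), deriv f y < 0 := by
    intro y hy
    have := hanti hxmem (by constructor <;> [linarith [hy.1]; exact hy.2]) hy.1
    rwa [hd0] at this
  have hfanti : StrictAntiOn f (Ico x (x + δ)) := by
    apply strictAntiOn_of_deriv_neg (convex_Ico _ _)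
      ((aux_d1 hf).continuous.continuousOn)
    intro y hy
    rw [interior_Ico] at hy
    exact hderivneg y hy
  have hloc : ∀ᶠ z in 𝓝 x, f x ≤ f z := h
  obtain ⟨ε, hε0, hε⟩ := Metric.eventually_nhds_iff.mp hloc
  have hymin : 0 < min δ ε := lt_min hδ0 hε0
  set y := x + min δ ε / 2 with hy
  have hyx : x < y := by rw [hy]; linarith
  have hyd : y < x + δ := by
    have : min δ ε ≤ δ := min_le_left _ _
    rw [hy]; linarith
  have h1 : f y < f x := hfanti ⟨le_refl x, by linarith⟩ ⟨hyx.le, hyd⟩ hyx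
  have h2 : f x ≤ f y := by
    apply hε
    have : min δ ε ≤ ε := min_le_right _ _
    rw [Real.dist_eq, hy, abs_lt]
    constructor <;> [linarith; linarith]
  linarith

lemma second_deriv_nonpos_of_isLocalMax {f : ℝ → ℝ} (hf : ContDiff ℝ 2 f) {x : ℝ}
    (h : IsLocalMax f x) : deriv (deriv f) x ≤ 0 := by
  have hneg := second_deriv_nonneg_of_isLocalMin (f := fun y => -f y) (hf.neg) h.neg
  have e1 : deriv (fun y => -f y) = fun y => -(deriv f y) := funext fun y => deriv.neg
  rw [e1] at hneg
  have e2 : deriv (fun y => -(deriv f y)) x = -(deriv (deriv f) x) := deriv.neg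
  rw [e2] at hneg
  linarith

lemma supersol_nonneg {w : ℝ → ℝ} (hw : ContDiff ℝ 2 w) {dd th A B : ℝ} (hdd : 0 < dd)
    (hAB : A < B) (hineq : ∀ x ∈ Icc A B, dd * deriv (deriv w) x + th * deriv w x < 0)
    (hA : w A = 0) (hB : w B = 0) : ∀ x ∈ Icc A B, 0 ≤ w x := by
  by_contra hcon
  push_neg at hcon
  obtain ⟨x1, hx1mem, hx1⟩ := hcon
  obtain ⟨xs, hxsmem, hmin⟩ := isCompact_Icc.exists_isMinOn (Set.nonempty_Icc.2 hAB.le)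
    hw.continuous.continuousOn
  have hxsneg : w xs < 0 := lt_of_le_of_lt (hmin hx1mem) hx1
  have hxsA : xs ≠ A := fun h => by rw [h, hA] at hxsneg; linarith
  have hxsB : xs ≠ B := fun h => by rw [h, hB] at hxsneg; linarith
  have hxsIoo : xs ∈ Ioo A B :=
    ⟨lt_of_le_of_ne hxsmem.1 (Ne.symm hxsA), lt_of_le_of_ne hxsmem.2 hxsB⟩
  have hloc : IsLocalMin w xs := hmin.isLocalMin (Icc_mem_nhds hxsIoo.1 hxsIoo.2)
  have h1 : deriv w xs = 0 := hloc.deriv_eq_zero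
  have h2 : 0 ≤ deriv (deriv w) xs := second_deriv_nonneg_of_isLocalMin hw hloc
  have := hineq xs hxsmem
  rw [h1] at this
  nlinarith

lemma exists_global_max {f : ℝ → ℝ} (hc : Continuous f)
    (hb : Tendsto f atBot (nhds 0)) (ht : Tendsto f atTop (nhds 0)) (hf0 : 0 < f 0) :
    ∃ x0, ∀ x, f x ≤ f x0 := by
  obtain ⟨R1, hR1⟩ := eventually_atBot.mp (hb.eventually_lt_const hf0)
  obtain ⟨R2, hR2⟩ := eventually_atTop.mp (ht.eventually_lt_const hf0)
  set a := min R1 0 with ha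
  set b := max R2 0 with hb'
  have hab : a ≤ b := le_trans (min_le_right _ _) (le_max_right _ _)
  obtain ⟨x0, hx0mem, hmax⟩ := isCompact_Icc.exists_isMaxOn (Set.nonempty_Icc.2 hab)
    hc.continuousOn
  have h0mem : (0:ℝ) ∈ Icc a b := ⟨min_le_right _ _, le_max_right _ _⟩
  refine ⟨x0, fun x => ?_⟩
  rcases le_or_gt x a with hxa | hxa
  · rcases lt_or_ge x a with hxa' | hxa'
    · exact le_trans (hR1 x (le_trans hxa'.le (min_le_left _ _))).le (hmax h0mem)
    · have : x = a := le_antisymm hxa hxa'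
      exact hmax ⟨this.ge, this.le.trans hab⟩
  · rcases le_or_gt x b with hxb | hxb
    · exact hmax ⟨hxa.le, hxb⟩
    · exact le_trans (hR2 x (le_trans (le_max_left _ _) hxb.le)).le (hmax h0mem)

lemma exists_left_crossing {q : ℝ → ℝ} (hq : Continuous q) {z0 lev L : ℝ}
    (h0 : q z0 < lev) (hten : Tendsto q atBot (nhds L)) (hL : lev < L) :
    ∃ A, A < z0 ∧ q A = lev ∧ ∀ x, A < x → x ≤ z0 → q x < lev := by
  set S := {x | x ≤ z0 ∧ lev ≤ q x} with hS
  obtain ⟨R, hR⟩ := eventually_atBot.mp (hten.eventually_const_lt hL)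
  have hSne : S.Nonempty := by
    refine ⟨min R (z0 - 1), ?_, (hR _ (min_le_left _ _)).le⟩
    exact le_trans (min_le_right _ _) (by linarith)
  have hSbdd : BddAbove S := ⟨z0, fun x hx => hx.1⟩
  have hSclosed : IsClosed S := by
    have : S = Iic z0 ∩ q ⁻¹' (Ici lev) :=
      Set.ext fun x => ⟨fun h => ⟨h.1, h.2⟩, fun h => ⟨h.1, h.2⟩⟩
    rw [this]
    exact isClosed_Iic.inter (isClosed_Ici.preimage hq)
  have hAmem : sSup S ∈ S := hSclosed.csSup_mem hSne hSbdd
  set A := sSup S with hA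
  have hAz0 : A < z0 := lt_of_le_of_ne hAmem.1 (fun h => by
    have := hAmem.2; rw [h] at this; linarith)
  have hnotin : ∀ x, A < x → x ≤ z0 → q x < lev := by
    intro x hx1 hx2
    by_contra hcon
    push_neg at hcon
    exact absurd (le_csSup hSbdd (⟨hx2, hcon⟩ : x ∈ S)) (not_le.2 hx1)
  refine ⟨A, hAz0, le_antisymm ?_ hAmem.2, hnotin⟩
  by_contra hcon
  push_neg at hcon
  obtain ⟨δ, hδ0, hδ⟩ := Metric.eventually_nhds_iff.mp
    ((hq.continuousAt (x := A)).eventually_const_lt hcon)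
  set y := A + min δ (z0 - A) / 2 with hy
  have hmin0 : 0 < min δ (z0 - A) := lt_min hδ0 (by linarith)
  have h1 : lev < q y := by
    apply hδ
    rw [Real.dist_eq, hy, abs_lt]
    have : min δ (z0 - A) ≤ δ := min_le_left _ _
    constructor <;> linarith
  have h2 : q y < lev := by
    apply hnotin y (by rw [hy]; linarith)
    have : min δ (z0 - A) ≤ z0 - A := min_le_right _ _
    rw [hy]; linarith
  linarith

lemma exists_right_crossing {q : ℝ → ℝ} (hq : Continuous q) {z0 lev L : ℝ}
    (h0 : q z0 < lev) (hten : Tendsto q atTop (nhds L)) (hL : lev < L) :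
    ∃ B, z0 < B ∧ q B = lev ∧ ∀ x, z0 ≤ x → x < B → q x < lev := by
  obtain ⟨A, hA1, hA2, hA3⟩ := exists_left_crossing (q := fun x => q (-x))
    (hq.comp continuous_neg) (z0 := -z0) (by simpa using h0)
    (hten.comp tendsto_neg_atBot_atTop) hL
  refine ⟨-A, by linarith, by simpa using hA2, fun x hx1 hx2 => ?_⟩
  have := hA3 (-x) (by linarith) (by linarith)
  simpa using this


lemma exp_chain (c : ℝ) (x : ℝ) :
    HasDerivAt (fun y => Real.exp (c * y)) (c * Real.exp (c * x)) x := by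
  have h := (Real.hasDerivAt_exp (c * x)).comp x ((hasDerivAt_id x).const_mul c)
  simpa [mul_comm, Function.comp_def] using h

lemma single_species_bound {th dd A B : ℝ} (f : ℝ → ℝ) (hf : ContDiff ℝ 2 f)
    (hth : 0 < th) (hdd : 0 < dd) (hAB : A < B)
    (hsup : ∀ x ∈ Icc A B, dd * deriv (deriv f) x + th * deriv f x < 0) :
    ∀ z ∈ Icc A B,
      f A * ((Real.exp (-(th/dd)*z) - Real.exp (-(th/dd)*B)) /
          (Real.exp (-(th/dd)*A) - Real.exp (-(th/dd)*B)))
        + f B * (1 - (Real.exp (-(th/dd)*z) - Real.exp (-(th/dd)*B)) /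
          (Real.exp (-(th/dd)*A) - Real.exp (-(th/dd)*B))) ≤ f z := by
  intro z hz
  set c : ℝ := -(th/dd) with hc
  have hc0 : c < 0 := by rw [hc]; simp; positivity
  have hcd : dd * c + th = 0 := by rw [hc]; field_simp; ring
  have hden : 0 < Real.exp (c*A) - Real.exp (c*B) := by
    rw [sub_pos, Real.exp_lt_exp]
    nlinarith
  set r : ℝ := (f A - f B) / (Real.exp (c*A) - Real.exp (c*B)) with hr
  set p : ℝ := f A - r * Real.exp (c*A) with hp
  set h : ℝ → ℝ := fun x => p + r * Real.exp (c*x) with hh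
  have hd1 : ∀ x, HasDerivAt h (r * c * Real.exp (c*x)) x := by
    intro x
    have := ((exp_chain c x).const_mul r).const_add p
    simpa [hh, mul_comm, mul_assoc, mul_left_comm] using this
  have hderivh : ∀ x, deriv h x = r * c * Real.exp (c*x) := fun x => (hd1 x).deriv
  have hderivhfun : deriv h = fun x => r * c * Real.exp (c*x) := funext hderivh
  have hd2 : ∀ x, HasDerivAt (fun y => r * c * Real.exp (c*y)) (r * c * c * Real.exp (c*x)) x := by
    intro x
    have := (exp_chain c x).const_mul (r * c)
    simpa [mul_comm, mul_assoc, mul_left_comm] using this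
  have hderivh2 : ∀ x, deriv (deriv h) x = r * c * c * Real.exp (c*x) := by
    intro x
    rw [hderivhfun]
    exact (hd2 x).deriv
  have hhc : ContDiff ℝ 2 h := by
    apply contDiff_const.add
    exact contDiff_const.mul (Real.contDiff_exp.comp (contDiff_const.mul contDiff_id))
  set w : ℝ → ℝ := fun x => f x - h x with hw
  have hwc : ContDiff ℝ 2 w := hf.sub hhc
  have hfd1 : Differentiable ℝ f := hf.differentiable (by norm_num)
  have hfd2 : Differentiable ℝ (deriv f) := by
    rw [show (2 : WithTop ℕ∞) = 1 + 1 by norm_num] at hf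
    exact (contDiff_succ_iff_deriv.mp hf).2.2.differentiable (by norm_num)
  have hderivw : ∀ x, deriv w x = deriv f x - deriv h x := by
    intro x
    exact deriv_sub (hfd1 x) (hd1 x).differentiableAt
  have hderivwfun : deriv w = fun x => deriv f x - r * c * Real.exp (c*x) := by
    funext x
    rw [hderivw x, hderivh x]
  have hderivw2 : ∀ x, deriv (deriv w) x = deriv (deriv f) x - r * c * c * Real.exp (c*x) := by
    intro x
    rw [hderivwfun]
    have := deriv_sub (hfd2 x) (hd2 x).differentiableAt
    rw [show (fun x => deriv f x - r * c * Real.exp (c*x)) = deriv f - fun y => r * c * Real.exp (c*y) from rfl, this, (hd2 x).deriv]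
  have hwA : w A = 0 := by
    simp only [hw, hh, hp]; ring
  have hwB : w B = 0 := by
    simp only [hw, hh, hp, hr]
    field_simp
    ring
  have hsupw : ∀ x ∈ Icc A B, dd * deriv (deriv w) x + th * deriv w x < 0 := by
    intro x hx
    rw [hderivw2 x, hderivw x, hderivh x]
    have h1 := hsup x hx
    have h2 : dd * (r*c*c*Real.exp (c*x)) + th * (r*c*Real.exp (c*x))
        = (r * c * Real.exp (c*x)) * (dd * c + th) := by ring
    have h3 : dd * (r*c*c*Real.exp (c*x)) + th * (r*c*Real.exp (c*x)) = 0 := by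
      rw [h2, hcd, mul_zero]
    linarith [h1, h3]
  have hcomp := supersol_nonneg hwc hdd hAB hsupw hwA hwB z hz
  have hwz : h z ≤ f z := by
    have : 0 ≤ f z - h z := hcomp
    linarith
  calc f A * ((Real.exp (c*z) - Real.exp (c*B)) / (Real.exp (c*A) - Real.exp (c*B)))
        + f B * (1 - (Real.exp (c*z) - Real.exp (c*B)) / (Real.exp (c*A) - Real.exp (c*B)))
      = h z := by
        simp only [hh, hp, hr]
        field_simp
        ring
    _ ≤ f z := hwz


noncomputable def phiF (th A B z dd : ℝ) : ℝ :=
  (Real.exp (-(th/dd)*z) - Real.exp (-(th/dd)*B)) /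
    (Real.exp (-(th/dd)*A) - Real.exp (-(th/dd)*B))

lemma phi_norm {th A B z dd : ℝ} (hdd : 0 < dd) :
    phiF th A B z dd = (Real.exp (-(th/dd)*(z-A)) - Real.exp (-(th/dd)*(B-A))) /
      (1 - Real.exp (-(th/dd)*(B-A))) := by
  have e1 : ∀ x : ℝ, Real.exp (-(th/dd)*x)
      = Real.exp (-(th/dd)*A) * Real.exp (-(th/dd)*(x-A)) := by
    intro x
    rw [← Real.exp_add]
    ring_nf
  have hEA : (0:ℝ) < Real.exp (-(th/dd)*A) := Real.exp_pos _
  rw [phiF, e1 z, e1 B, e1 A]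
  rw [show -(th/dd)*(A-A) = 0 by ring, Real.exp_zero]
  rw [show Real.exp (-(th/dd)*A) * 1 * Real.exp (-(th/dd)*(z-A))
        - Real.exp (-(th/dd)*A) * 1 * Real.exp (-(th/dd)*(B-A))
      = Real.exp (-(th/dd)*A) * (Real.exp (-(th/dd)*(z-A)) - Real.exp (-(th/dd)*(B-A))) by ring,
    show Real.exp (-(th/dd)*A) * 1 - Real.exp (-(th/dd)*A) * 1 * Real.exp (-(th/dd)*(B-A))
      = Real.exp (-(th/dd)*A) * (1 - Real.exp (-(th/dd)*(B-A))) by ring,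
    mul_div_mul_left _ _ hEA.ne']

lemma phi_exp_pow {th dd ee y : ℝ} (hth : 0 < th) (hdd : 0 < dd) (hee : 0 < ee) :
    Real.exp (-(th/dd)*y) = (Real.exp (-(th/ee)*y)) ^ (ee/dd) := by
  rw [← Real.exp_mul]
  congr 1
  field_simp

lemma phi_mono {th A B z dd ee : ℝ} (hth : 0 < th) (hdd : 0 < dd) (hde : dd ≤ ee)
    (hAz : A < z) (hzB : z < B) : phiF th A B z dd ≤ phiF th A B z ee := by
  have hee : 0 < ee := lt_of_lt_of_le hdd hde
  rw [phi_norm hdd, phi_norm hee]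
  rw [phi_exp_pow hth hdd hee (y := z - A), phi_exp_pow hth hdd hee (y := B - A)]
  apply lemE_alg
  · exact Real.exp_pos _
  · rw [Real.exp_lt_one_iff]
    have : 0 < th/ee := by positivity
    nlinarith
  · rw [Real.exp_le_exp]
    have : 0 < th/ee := by positivity
    nlinarith
  · rw [← Real.exp_zero, Real.exp_le_exp]
    have : 0 < th/ee := by positivity
    nlinarith
  · rw [le_div_iff₀ hdd, one_mul]
    exact hde

lemma phi_gap {th A B z a b : ℝ} (hth : 0 < th) (ha : 0 < a) (hab : a ≤ b)
    (hAz : A < z) (hzB : z < B) :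
    phiF th A B z b - phiF th A B z a ≤ 1 - a/b := by
  have hb : 0 < b := lt_of_lt_of_le ha hab
  rw [phi_norm ha, phi_norm hb]
  rw [phi_exp_pow hth ha hb (y := z - A), phi_exp_pow hth ha hb (y := B - A)]
  have h := lemF_alg (S := Real.exp (-(th/b)*(B-A))) (u := Real.exp (-(th/b)*(z-A)))
    (κ := b/a) (Real.exp_pos _) ?_ ?_ ?_ ?_
  · rw [show 1/(b/a) = a/b by rw [one_div_div]] at h
    exact h
  · rw [Real.exp_lt_one_iff]
    have : 0 < th/b := by positivity
    nlinarith
  · rw [Real.exp_le_exp]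
    have : 0 < th/b := by positivity
    nlinarith
  · rw [← Real.exp_zero, Real.exp_le_exp]
    have : 0 < th/b := by positivity
    nlinarith
  · rw [le_div_iff₀ ha, one_mul]
    exact hab



lemma single_species_phi {th dd A B : ℝ} (f : ℝ → ℝ) (hf : ContDiff ℝ 2 f)
    (hth : 0 < th) (hdd : 0 < dd) (hAB : A < B)
    (hsup : ∀ x ∈ Icc A B, dd * deriv (deriv f) x + th * deriv f x < 0) :
    ∀ z ∈ Icc A B,
      f A * phiF th A B z dd + f B * (1 - phiF th A B z dd) ≤ f z :=
  fun z hz => single_species_bound f hf hth hdd hAB hsup z hz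


lemma single_species_bound_lin {th dd A B : ℝ} (f : ℝ → ℝ) (hf : ContDiff ℝ 2 f)
    (hth : th = 0) (hdd : 0 < dd) (hAB : A < B)
    (hsup : ∀ x ∈ Icc A B, dd * deriv (deriv f) x + th * deriv f x < 0) :
    ∀ z ∈ Icc A B, f A * ((B-z)/(B-A)) + f B * ((z-A)/(B-A)) ≤ f z := by
  intro z hz
  have hBA : (0:ℝ) < B - A := by linarith
  set r : ℝ := (f B - f A)/(B - A) with hr
  set p : ℝ := f A - r * A with hp
  set h : ℝ → ℝ := fun x => p + r * x with hh
  have hd1 : ∀ x, HasDerivAt h r x := by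
    intro x
    have := ((hasDerivAt_id x).const_mul r).const_add p
    simpa [hh] using this
  have hderivh : deriv h = fun _ => r := funext fun x => (hd1 x).deriv
  have hderivh2 : ∀ x, deriv (deriv h) x = 0 := by
    intro x; rw [hderivh]; exact deriv_const x r
  have hhc : ContDiff ℝ 2 h := contDiff_const.add (contDiff_const.mul contDiff_id)
  set w : ℝ → ℝ := fun x => f x - h x with hw
  have hwc : ContDiff ℝ 2 w := hf.sub hhc
  have hfd1 : Differentiable ℝ f := hf.differentiable (by norm_num)
  have hfd2 : Differentiable ℝ (deriv f) := by
    rw [show (2 : WithTop ℕ∞) = 1 + 1 by norm_num] at hf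
    exact (contDiff_succ_iff_deriv.mp hf).2.2.differentiable (by norm_num)
  have hderivw : ∀ x, deriv w x = deriv f x - r := by
    intro x
    have := deriv_sub (hfd1 x) (hd1 x).differentiableAt
    rw [show w = f - h from rfl, this, (hd1 x).deriv]
  have hderivwfun : deriv w = fun x => deriv f x - r := funext hderivw
  have hderivw2 : ∀ x, deriv (deriv w) x = deriv (deriv f) x := by
    intro x
    rw [hderivwfun]
    exact deriv_sub_const r
  have hwA : w A = 0 := by
    simp only [hw, hh, hp]; ring
  have hwB : w B = 0 := by
    simp only [hw, hh, hp, hr]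
    field_simp
    ring
  have hsupw : ∀ x ∈ Icc A B, dd * deriv (deriv w) x + th * deriv w x < 0 := by
    intro x hx
    rw [hderivw2 x, hderivw x, hth]
    have := hsup x hx
    rw [hth] at this
    linarith
  have hcomp := supersol_nonneg hwc hdd hAB hsupw hwA hwB z hz
  have hwz : h z ≤ f z := by
    have : 0 ≤ f z - h z := hcomp
    linarith
  calc f A * ((B-z)/(B-A)) + f B * ((z-A)/(B-A)) = h z := by
        simp only [hh, hp, hr]
        field_simp
        ring
    _ ≤ f z := hwz

lemma nbmp_core {th a b mu : ℝ} (hth : 0 ≤ th) (ha : 0 < a) (hmu : 0 < mu)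
    {d3 al : Fin 3 → ℝ} {v : Fin 3 → ℝ → ℝ}
    (hd : ∀ i, a ≤ d3 i ∧ d3 i ≤ b)
    (hal : ∀ i, 0 < al i)
    (hv2 : ∀ i, ContDiff ℝ 2 (v i))
    (hvpos : ∀ i x, 0 < v i x)
    (hsub : ∀ x, (∑ i, al i * v i x) < mu → ∀ i,
      d3 i * deriv (deriv (v i)) x + th * deriv (v i) x < 0)
    {Lb Lt : ℝ} (hLb : mu ≤ Lb) (hLt : mu ≤ Lt)
    (hqb : Tendsto (fun x => ∑ i, al i * v i x) atBot (nhds Lb))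
    (hqt : Tendsto (fun x => ∑ i, al i * v i x) atTop (nhds Lt)) :
    ∀ z, a / b * mu ≤ ∑ i, al i * v i z := by
  intro z
  by_contra hcon
  push_neg at hcon
  set q : ℝ → ℝ := fun x => ∑ i, al i * v i x with hq
  have hab : a ≤ b := le_trans (hd 0).1 (hd 0).2
  have hb : 0 < b := lt_of_lt_of_le ha hab
  have hqz : 0 < q z :=
    Finset.sum_pos (fun i _ => mul_pos (hal i) (hvpos i z)) Finset.univ_nonempty
  have hstar : b / a * q z < mu := by
    have h1 : b * q z < b * (a/b*mu) := mul_lt_mul_of_pos_left hcon hb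
    have h2 : b * (a/b*mu) = a * mu := by field_simp
    rw [div_mul_eq_mul_div, div_lt_iff₀ ha]
    nlinarith
  set mu' : ℝ := (b/a*q z + mu)/2 with hmu'
  have hba1 : 1 ≤ b/a := (one_le_div ha).2 hab
  have hmu'1 : mu' < mu := by rw [hmu']; linarith
  have hmu'2 : b/a*q z < mu' := by rw [hmu']; linarith
  have hmu'3 : q z < mu' := by nlinarith
  have hmu'pos : 0 < mu' := by nlinarith
  have hqc : Continuous q := by
    apply continuous_finset_sum
    intro i _
    exact continuous_const.mul (hv2 i).continuous
  obtain ⟨A, hAz, hqA, hAin⟩ := exists_left_crossing hqc hmu'3 hqb (lt_of_lt_of_le hmu'1 hLb)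
  obtain ⟨B, hzB, hqB, hBin⟩ := exists_right_crossing hqc hmu'3 hqt (lt_of_lt_of_le hmu'1 hLt)
  have hAB : A < B := hAz.trans hzB
  have hzmem : z ∈ Icc A B := ⟨hAz.le, hzB.le⟩
  have hIcc : ∀ x ∈ Icc A B, q x ≤ mu' := by
    intro x hx
    rcases le_total x z with hxz | hxz
    · rcases eq_or_lt_of_le hx.1 with heq | hlt
      · rw [← heq, hqA]
      · exact (hAin x hlt hxz).le
    · rcases eq_or_lt_of_le hx.2 with heq | hlt
      · rw [heq, hqB]
      · exact (hBin x hxz hlt).le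
  have hsub' : ∀ i, ∀ x ∈ Icc A B,
      d3 i * deriv (deriv (v i)) x + th * deriv (v i) x < 0 :=
    fun i x hx => hsub x (lt_of_le_of_lt (hIcc x hx) hmu'1) i
  have hd3pos : ∀ i, 0 < d3 i := fun i => lt_of_lt_of_le ha (hd i).1
  -- the final contradiction bound
  have hfinal : q z < a/b * mu' := by
    have h1 : a/b * (b/a * q z) < a/b * mu' :=
      mul_lt_mul_of_pos_left hmu'2 (by positivity)
    have h2 : a/b * (b/a * q z) = q z := by field_simp
    linarith
  rcases eq_or_lt_of_le hth with hth0 | hthpos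
  · -- θ = 0
    have hbound : ∀ i, al i * (v i A * ((B-z)/(B-A)) + v i B * ((z-A)/(B-A))) ≤ al i * v i z := by
      intro i
      exact mul_le_mul_of_nonneg_left
        (single_species_bound_lin (v i) (hv2 i) hth0.symm (hd3pos i) hAB (hsub' i) z hzmem)
        (hal i).le
    have hsum : ∑ i, al i * (v i A * ((B-z)/(B-A)) + v i B * ((z-A)/(B-A))) ≤ q z :=
      Finset.sum_le_sum (fun i _ => hbound i)
    have heq : ∑ i, al i * (v i A * ((B-z)/(B-A)) + v i B * ((z-A)/(B-A)))
        = ((B-z)/(B-A)) * q A + ((z-A)/(B-A)) * q B := by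
      rw [hq]
      simp only
      rw [Finset.mul_sum, Finset.mul_sum, ← Finset.sum_add_distrib]
      apply Finset.sum_congr rfl
      intro i _
      ring
    rw [heq, hqA, hqB] at hsum
    have hcomb : ((B-z)/(B-A)) * mu' + ((z-A)/(B-A)) * mu' = mu' := by
      have h1 : (B-z)/(B-A) + (z-A)/(B-A) = 1 := by
        rw [← add_div, show B - z + (z - A) = B - A by ring,
          div_self (by linarith : B - A ≠ 0)]
      linear_combination mu' * h1
    rw [hcomb] at hsum
    linarith
  · -- θ > 0
    set Φlow : ℝ := phiF th A B z a with hPl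
    set Φhigh : ℝ := phiF th A B z b with hPh
    have hbound : ∀ i, al i * (v i A * Φlow + v i B * (1 - Φhigh)) ≤ al i * v i z := by
      intro i
      apply mul_le_mul_of_nonneg_left _ (hal i).le
      have hmono1 : Φlow ≤ phiF th A B z (d3 i) :=
        phi_mono hthpos ha (hd i).1 hAz hzB
      have hmono2 : phiF th A B z (d3 i) ≤ Φhigh :=
        phi_mono hthpos (hd3pos i) (hd i).2 hAz hzB
      have hssb := single_species_phi (v i) (hv2 i) hthpos (hd3pos i) hAB (hsub' i) z hzmem
      have h1 : v i A * Φlow ≤ v i A * phiF th A B z (d3 i) :=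
        mul_le_mul_of_nonneg_left hmono1 (hvpos i A).le
      have h2 : v i B * (1 - Φhigh) ≤ v i B * (1 - phiF th A B z (d3 i)) :=
        mul_le_mul_of_nonneg_left (by linarith) (hvpos i B).le
      linarith
    have hsum : ∑ i, al i * (v i A * Φlow + v i B * (1 - Φhigh)) ≤ q z :=
      Finset.sum_le_sum (fun i _ => hbound i)
    have heq : ∑ i, al i * (v i A * Φlow + v i B * (1 - Φhigh))
        = Φlow * q A + (1 - Φhigh) * q B := by
      rw [hq]
      simp only
      rw [Finset.mul_sum, Finset.mul_sum, ← Finset.sum_add_distrib]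
      apply Finset.sum_congr rfl
      intro i _
      ring
    rw [heq, hqA, hqB] at hsum
    have hgap : Φhigh - Φlow ≤ 1 - a/b := phi_gap hthpos ha hab hAz hzB
    have hcomb : a/b * mu' ≤ Φlow * mu' + (1 - Φhigh) * mu' := by
      have : a/b ≤ Φlow + (1 - Φhigh) := by linarith
      nlinarith
    linarith


lemma fin3_last : (Fin.last 3 : Fin 4) = 3 := rfl

lemma master {d σ : Fin 4 → ℝ} {c : Fin 4 → Fin 4 → ℝ} {θ : ℝ} (hθ : 0 ≤ θ)
    (hd : ∀ i, 0 < d i) (hσ : ∀ i, 0 < σ i) (hc : ∀ i j, 0 < c i j)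
    (hH1 : ∀ i : Fin 3, 0 < σ i.castSucc - c i.castSucc 3 * σ 3 / c 3 3)
    {a b mu : ℝ} (ha : 0 < a) (hab4 : ∀ i, a ≤ d i ∧ d i ≤ b) (hmu : 0 < mu)
    (hmule : ∀ i j : Fin 3, mu ≤ c 3 i.castSucc *
        ((σ j.castSucc - c j.castSucc 3 * σ 3 / c 3 3) / c j.castSucc i.castSucc))
    (hH2 : σ 3 ≤ mu * (a / b))
    (u : Fin 4 → ℝ → ℝ)
    (hu2 : ∀ i, ContDiff ℝ 2 (u i))
    (hupos : ∀ i x, 0 < u i x)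
    (heq : ∀ i x, d i * deriv (deriv (u i)) x + θ * deriv (u i) x
        + u i x * (σ i - ∑ j, c i j * u j x) = 0)
    (hu3b : Tendsto (u 3) atBot (nhds 0)) (hu3t : Tendsto (u 3) atTop (nhds 0))
    {Lb Lt : ℝ} (hLb : mu ≤ Lb) (hLt : mu ≤ Lt)
    (hqb : Tendsto (fun x => ∑ i : Fin 3, c 3 i.castSucc * u i.castSucc x) atBot (nhds Lb))
    (hqt : Tendsto (fun x => ∑ i : Fin 3, c 3 i.castSucc * u i.castSucc x) atTop (nhds Lt)) :
    False := by
  obtain ⟨x0, hx0⟩ := exists_global_max (hu2 3).continuous hu3b hu3t (hupos 3 0)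
  have hmax : IsLocalMax (u 3) x0 := Filter.Eventually.of_forall hx0
  have hD0 : deriv (u 3) x0 = 0 := hmax.deriv_eq_zero
  have hD2 : deriv (deriv (u 3)) x0 ≤ 0 := second_deriv_nonpos_of_isLocalMax (hu2 3) hmax
  have heq3 := heq 3 x0
  have hS : ∑ j : Fin 4, c 3 j * u j x0 ≤ σ 3 := by
    have h1 : 0 ≤ u 3 x0 * (σ 3 - ∑ j, c 3 j * u j x0) := by nlinarith [hd 3]
    nlinarith [hupos 3 x0]
  have hu3bd : ∀ x, c 3 3 * u 3 x ≤ σ 3 := by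
    intro x
    have h1 : c 3 3 * u 3 x0 ≤ ∑ j : Fin 4, c 3 j * u j x0 :=
      Finset.single_le_sum (f := fun j => c 3 j * u j x0)
        (fun j _ => (mul_pos (hc 3 j) (hupos j x0)).le) (Finset.mem_univ 3)
    have h2 : u 3 x ≤ u 3 x0 := hx0 x
    nlinarith [hc 3 3]
  -- apply the core lemma
  have hcore := nbmp_core (th := θ) (a := a) (b := b) (mu := mu) hθ ha hmu
    (d3 := fun i => d i.castSucc) (al := fun i => c 3 i.castSucc)
    (v := fun i => u i.castSucc)
    (fun i => hab4 i.castSucc) (fun i => hc 3 i.castSucc) (fun i => hu2 i.castSucc)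
    (fun i x => hupos i.castSucc x) ?_ hLb hLt hqb hqt
  · -- final contradiction at x0
    have hq0 := hcore x0
    have hsplit : ∑ j : Fin 4, c 3 j * u j x0
        = (∑ i : Fin 3, c 3 i.castSucc * u i.castSucc x0) + c 3 3 * u 3 x0 := by
      rw [Fin.sum_univ_castSucc (f := fun j => c 3 j * u j x0), fin3_last]
    have h3 : 0 < c 3 3 * u 3 x0 := mul_pos (hc 3 3) (hupos 3 x0)
    have h4 : mu * (a/b) = a/b * mu := by ring
    nlinarith [hq0, hS, hH2]
  · -- the subsolution property
    intro x hx i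
    have heqi := heq i.castSucc x
    have hsplit : ∑ j : Fin 4, c i.castSucc j * u j x
        = (∑ j : Fin 3, c i.castSucc j.castSucc * u j.castSucc x) + c i.castSucc 3 * u 3 x := by
      rw [Fin.sum_univ_castSucc (f := fun j => c i.castSucc j * u j x), fin3_last]
    set s : ℝ := σ i.castSucc - c i.castSucc 3 * σ 3 / c 3 3 with hs
    have hspos : 0 < s := hH1 i
    have hterm : ∀ j : Fin 3, c i.castSucc j.castSucc * u j.castSucc x
        ≤ s / mu * (c 3 j.castSucc * u j.castSucc x) := by
      intro j
      have hm := hmule j i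
      have hcij : 0 < c i.castSucc j.castSucc := hc _ _
      have hcj : 0 < c 3 j.castSucc := hc _ _
      have hup : 0 < u j.castSucc x := hupos _ _
      have hm2 : mu * c i.castSucc j.castSucc ≤ c 3 j.castSucc * s := by
        have h1 := mul_le_mul_of_nonneg_right hm hcij.le
        calc mu * c i.castSucc j.castSucc
            ≤ c 3 j.castSucc * (s / c i.castSucc j.castSucc) * c i.castSucc j.castSucc := h1
          _ = c 3 j.castSucc * s := by field_simp
      have h3 : c i.castSucc j.castSucc ≤ s / mu * c 3 j.castSucc := by
        rw [div_mul_eq_mul_div, le_div_iff₀ hmu]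
        linarith
      nlinarith
    have hsum3 : (∑ j : Fin 3, c i.castSucc j.castSucc * u j.castSucc x)
        ≤ s / mu * (∑ j : Fin 3, c 3 j.castSucc * u j.castSucc x) := by
      rw [Finset.mul_sum]
      exact Finset.sum_le_sum (fun j _ => hterm j)
    have h5 : s / mu * (∑ j : Fin 3, c 3 j.castSucc * u j.castSucc x) < s := by
      have h51 := mul_lt_mul_of_pos_left hx (show (0:ℝ) < s/mu by positivity)
      calc s / mu * (∑ j : Fin 3, c 3 j.castSucc * u j.castSucc x) < s/mu * mu := h51
        _ = s := by field_simp
    have h7 : u 3 x ≤ σ 3 / c 3 3 := by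
      rw [le_div_iff₀ (hc 3 3)]
      nlinarith [hu3bd x]
    have h8 : c i.castSucc 3 * u 3 x ≤ c i.castSucc 3 * (σ 3 / c 3 3) :=
      mul_le_mul_of_nonneg_left h7 (hc _ _).le
    have hF : 0 < σ i.castSucc - ∑ j : Fin 4, c i.castSucc j * u j x := by
      rw [hsplit]
      have : c i.castSucc 3 * (σ 3 / c 3 3) = c i.castSucc 3 * σ 3 / c 3 3 := by ring
      nlinarith [hsum3, h5, h8]
    nlinarith [mul_pos (hupos i.castSucc x) hF, heqi]


lemma deriv2_comp_neg (f : ℝ → ℝ) (x : ℝ) :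
    deriv (deriv (fun y => f (-y))) x = deriv (deriv f) (-x) := by
  have h1 : deriv (fun y => f (-y)) = fun y => -deriv f (-y) :=
    funext fun y => deriv_comp_neg f y
  rw [h1]
  have h2 : deriv (fun y => -deriv f (-y)) x = -deriv (fun y => deriv f (-y)) x := deriv.neg
  rw [h2, deriv_comp_neg (deriv f) x, neg_neg]


end LV4Aux

open Real Set Topology in
theorem nonexistence_lv4 (d σ : Fin 4 → ℝ) (c : Fin 4 → Fin 4 → ℝ) (θ : ℝ)
    (hd : ∀ i, 0 < d i) (hσ : ∀ i, 0 < σ i) (hc : ∀ i j, 0 < c i j)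
    (hH1 : ∀ i : Fin 3, 0 < σ i.castSucc - c i.castSucc 3 * σ 3 / c 3 3)
    (hH2 : σ 3 ≤
      (Finset.univ.inf' Finset.univ_nonempty
          (fun i : Fin 3 => c 3 i.castSucc *
            Finset.univ.inf' Finset.univ_nonempty
              (fun j : Fin 3 =>
                (σ j.castSucc - c j.castSucc 3 * σ 3 / c 3 3) / c j.castSucc i.castSucc)))
        * ((Finset.univ.inf' Finset.univ_nonempty d)
          / (Finset.univ.sup' Finset.univ_nonempty d))) :
    ¬ ∃ u : Fin 4 → ℝ → ℝ,
      (∀ i, ContDiff ℝ 2 (u i)) ∧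
      (∀ i x, 0 < u i x) ∧
      (∀ i x, d i * deriv (deriv (u i)) x + θ * deriv (u i) x
          + u i x * (σ i - ∑ j, c i j * u j x) = 0) ∧
      Tendsto (u 0) atBot (nhds (σ 0 / c 0 0)) ∧
      Tendsto (u 1) atBot (nhds 0) ∧
      Tendsto (u 2) atBot (nhds 0) ∧
      Tendsto (u 3) atBot (nhds 0) ∧
      Tendsto (u 0) atTop (nhds 0) ∧
      Tendsto (u 1) atTop (nhds (σ 1 / c 1 1)) ∧
      Tendsto (u 2) atTop (nhds 0) ∧
      Tendsto (u 3) atTop (nhds 0) := by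
  rintro ⟨u, hu2, hupos, heq, h0b, h1b, h2b, h3b, h0t, h1t, h2t, h3t⟩
  set a : ℝ := Finset.univ.inf' Finset.univ_nonempty d with hadef
  set b : ℝ := Finset.univ.sup' Finset.univ_nonempty d with hbdef
  set mu : ℝ := Finset.univ.inf' Finset.univ_nonempty
      (fun i : Fin 3 => c 3 i.castSucc *
        Finset.univ.inf' Finset.univ_nonempty
          (fun j : Fin 3 =>
            (σ j.castSucc - c j.castSucc 3 * σ 3 / c 3 3) / c j.castSucc i.castSucc)) with hmudef
  have ha : 0 < a := by
    rw [hadef, Finset.lt_inf'_iff]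
    exact fun i _ => hd i
  have hab4 : ∀ i, a ≤ d i ∧ d i ≤ b :=
    fun i => ⟨Finset.inf'_le _ (Finset.mem_univ i), Finset.le_sup' _ (Finset.mem_univ i)⟩
  have hmu : 0 < mu := by
    rw [hmudef, Finset.lt_inf'_iff]
    intro i _
    apply mul_pos (hc 3 i.castSucc)
    rw [Finset.lt_inf'_iff]
    intro j _
    exact div_pos (hH1 j) (hc _ _)
  have hmule : ∀ i j : Fin 3, mu ≤ c 3 i.castSucc *
      ((σ j.castSucc - c j.castSucc 3 * σ 3 / c 3 3) / c j.castSucc i.castSucc) := by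
    intro i j
    calc mu ≤ c 3 i.castSucc *
        Finset.univ.inf' Finset.univ_nonempty
          (fun j : Fin 3 =>
            (σ j.castSucc - c j.castSucc 3 * σ 3 / c 3 3) / c j.castSucc i.castSucc) :=
          Finset.inf'_le _ (Finset.mem_univ i)
      _ ≤ _ := by
          apply mul_le_mul_of_nonneg_left _ (hc 3 i.castSucc).le
          exact Finset.inf'_le _ (Finset.mem_univ j)
  have hH2' : σ 3 ≤ mu * (a / b) := hH2
  have e0 : (0 : Fin 3).castSucc = (0 : Fin 4) := rfl
  have e1 : (1 : Fin 3).castSucc = (1 : Fin 4) := rfl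
  have e2 : (2 : Fin 3).castSucc = (2 : Fin 4) := rfl
  -- limit lower bounds
  have hL0 : mu ≤ c 3 0 * (σ 0 / c 0 0) := by
    have h1 := hmule 0 0
    rw [e0] at h1
    have hnum : σ 0 - c 0 3 * σ 3 / c 3 3 ≤ σ 0 := by
      have : 0 ≤ c 0 3 * σ 3 / c 3 3 :=
        div_nonneg (mul_pos (hc 0 3) (hσ 3)).le (hc 3 3).le
      linarith
    have h2 : (σ 0 - c 0 3 * σ 3 / c 3 3) / c 0 0 ≤ σ 0 / c 0 0 := by
      gcongr
      exact (hc 0 0).le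
    exact le_trans h1 (mul_le_mul_of_nonneg_left h2 (hc 3 0).le)
  have hL1 : mu ≤ c 3 1 * (σ 1 / c 1 1) := by
    have h1 := hmule 1 1
    rw [e1] at h1
    have hnum : σ 1 - c 1 3 * σ 3 / c 3 3 ≤ σ 1 := by
      have : 0 ≤ c 1 3 * σ 3 / c 3 3 :=
        div_nonneg (mul_pos (hc 1 3) (hσ 3)).le (hc 3 3).le
      linarith
    have h2 : (σ 1 - c 1 3 * σ 3 / c 3 3) / c 1 1 ≤ σ 1 / c 1 1 := by
      gcongr
      exact (hc 1 1).le
    exact le_trans h1 (mul_le_mul_of_nonneg_left h2 (hc 3 1).le)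
  -- q-limits
  have hqexp : (fun x => ∑ i : Fin 3, c 3 i.castSucc * u i.castSucc x)
      = fun x => c 3 0 * u 0 x + c 3 1 * u 1 x + c 3 2 * u 2 x := by
    funext x
    rw [Fin.sum_univ_three]
    rfl
  have hqbot : Tendsto (fun x => ∑ i : Fin 3, c 3 i.castSucc * u i.castSucc x) atBot
      (nhds (c 3 0 * (σ 0 / c 0 0))) := by
    rw [hqexp]
    simpa using ((h0b.const_mul (c 3 0)).add (h1b.const_mul (c 3 1))).add
      (h2b.const_mul (c 3 2))
  have hqtop : Tendsto (fun x => ∑ i : Fin 3, c 3 i.castSucc * u i.castSucc x) atTop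
      (nhds (c 3 1 * (σ 1 / c 1 1))) := by
    rw [hqexp]
    simpa using ((h0t.const_mul (c 3 0)).add (h1t.const_mul (c 3 1))).add
      (h2t.const_mul (c 3 2))
  rcases le_or_gt 0 θ with hθ | hθ
  · exact master hθ hd hσ hc hH1 ha hab4 hmu hmule hH2' u hu2 hupos heq h3b h3t hL0 hL1
      hqbot hqtop
  · -- reflect
    set v : Fin 4 → ℝ → ℝ := fun i x => u i (-x) with hv
    have hv2 : ∀ i, ContDiff ℝ 2 (v i) := fun i => (hu2 i).comp contDiff_neg
    have hvpos : ∀ i x, 0 < v i x := fun i x => hupos i (-x)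
    have hveq : ∀ i x, d i * deriv (deriv (v i)) x + (-θ) * deriv (v i) x
        + v i x * (σ i - ∑ j, c i j * v j x) = 0 := by
      intro i x
      have h1 : deriv (deriv (v i)) x = deriv (deriv (u i)) (-x) := deriv2_comp_neg (u i) x
      have h2 : deriv (v i) x = -deriv (u i) (-x) := deriv_comp_neg (u i) x
      rw [h1, h2]
      have h3 := heq i (-x)
      have h4 : ∀ j, v j x = u j (-x) := fun j => rfl
      simp only [h4]
      linarith
    have hv3b : Tendsto (v 3) atBot (nhds 0) := h3t.comp tendsto_neg_atBot_atTop
    have hv3t : Tendsto (v 3) atTop (nhds 0) := h3b.comp tendsto_neg_atTop_atBot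
    have hqbot' : Tendsto (fun x => ∑ i : Fin 3, c 3 i.castSucc * v i.castSucc x) atBot
        (nhds (c 3 1 * (σ 1 / c 1 1))) := hqtop.comp tendsto_neg_atBot_atTop
    have hqtop' : Tendsto (fun x => ∑ i : Fin 3, c 3 i.castSucc * v i.castSucc x) atTop
        (nhds (c 3 0 * (σ 0 / c 0 0))) := hqbot.comp tendsto_neg_atTop_atBot
    exact master (neg_nonneg.2 hθ.le) hd hσ hc hH1 ha hab4 hmu hmule hH2' v hv2 hvpos hveq
      hv3b hv3t hL1 hL0 hqbot' hqtop'
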